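/- Let C ⊆ ℝ^p be a closed convex set with 0 in its relative interior, X ∈ ℝ^{n×p}, and let P denote orthogonal projection onto X·C^⊥ where C^⊥ = {v : v ⊥ span(C)}. Then for every y ∈ ℝ^n, the supremum of η ↦ ηᵀ Xᵀ (I − P) y over η in the polar set C° is finite. -/

import Mathlib

open Set Matrix

/-- For a closed convex `C ⊆ ℝᵖ` with `0` in its relative interior, the process
`η ↦ ηᵀ Xᵀ (I − P) y` is bounded above over the polar `C°`, where `P` is the orthogonal
projection onto `X·C^⊥`. -/
theorem support_process_bounded {n p : ℕ} (C : Set (EuclideanSpace ℝ (Fin p)))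
    (hC : IsClosed C) (hconv : Convex ℝ C)
    (r : ℝ) (hr : 0 < r)
    (hrel : ∀ x : EuclideanSpace ℝ (Fin p), ‖x‖ ≤ r →
      (↑(Submodule.orthogonalProjectionOnto (Submodule.span ℝ C) x) : EuclideanSpace ℝ (Fin p)) ∈ C)
    (X : Matrix (Fin n) (Fin p) ℝ) (y : EuclideanSpace ℝ (Fin n)) :
    ∃ M : ℝ, ∀ η ∈ {v : EuclideanSpace ℝ (Fin p) | ∀ u ∈ C, inner ℝ u v ≤ (1 : ℝ)},
      (inner ℝ ((WithLp.equiv 2 (Fin n → ℝ)).symm (X.mulVec η))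
        (y - ↑(Submodule.orthogonalProjectionOnto
          (Submodule.span ℝ
            ((fun v : EuclideanSpace ℝ (Fin p) =>
                (WithLp.equiv 2 (Fin n → ℝ)).symm (X.mulVec v)) ''
              (((Submodule.span ℝ C)ᗮ : Submodule ℝ (EuclideanSpace ℝ (Fin p))) :
                Set (EuclideanSpace ℝ (Fin p))))) y)) : ℝ) ≤ M := by
  classical
  set K : Submodule ℝ (EuclideanSpace ℝ (Fin p)) := Submodule.span ℝ C with hK
  -- the linear map v ↦ X v as a map of Euclidean spaces
  set L : EuclideanSpace ℝ (Fin p) →ₗ[ℝ] EuclideanSpace ℝ (Fin n) :=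
    { toFun := fun v => (WithLp.equiv 2 (Fin n → ℝ)).symm (X.mulVec v)
      map_add' := fun a b => by
        exact congrArg (WithLp.equiv 2 (Fin n → ℝ)).symm (Matrix.mulVec_add X a b)
      map_smul' := fun c a => by
        exact congrArg (WithLp.equiv 2 (Fin n → ℝ)).symm (Matrix.mulVec_smul X c a) } with hL
  set W : Submodule ℝ (EuclideanSpace ℝ (Fin n)) :=
    Submodule.span ℝ
      ((fun v : EuclideanSpace ℝ (Fin p) =>
          (WithLp.equiv 2 (Fin n → ℝ)).symm (X.mulVec v)) ''
        ((Kᗮ : Submodule ℝ (EuclideanSpace ℝ (Fin p))) :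
          Set (EuclideanSpace ℝ (Fin p)))) with hW
  set w : EuclideanSpace ℝ (Fin n) := y - ↑(W.orthogonalProjectionOnto y) with hw
  have hwmem : w ∈ Wᗮ := W.sub_starProjection_mem_orthogonal y
  set z : EuclideanSpace ℝ (Fin p) := (LinearMap.adjoint L) w with hz
  have hinner : ∀ v : EuclideanSpace ℝ (Fin p), (inner ℝ (L v) w : ℝ) = inner ℝ v z := by
    intro v
    rw [hz, LinearMap.adjoint_inner_right]
  -- z lies in K = Kᗮᗮ
  have hzK : z ∈ K := by
    rw [← Submodule.orthogonal_orthogonal K]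
    intro v hv
    have hLv : L v ∈ W := Submodule.subset_span ⟨v, hv, rfl⟩
    calc (inner ℝ v z : ℝ) = inner ℝ (L v) w := (hinner v).symm
      _ = inner ℝ w (L v) := real_inner_comm w (L v)
      _ = 0 := (Submodule.mem_orthogonal Wᗮ (L v)).mp
          (Submodule.le_orthogonal_orthogonal W hLv) w hwmem
  refine ⟨‖z‖ / r, fun η hη => ?_⟩
  have key : (inner ℝ (L η) w : ℝ) ≤ ‖z‖ / r := by
    rw [hinner]
    set ηC : EuclideanSpace ℝ (Fin p) := ↑(K.orthogonalProjectionOnto η) with hηC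
    have hdiff : η - ηC ∈ Kᗮ := K.sub_starProjection_mem_orthogonal η
    have hsplit : (inner ℝ η z : ℝ) = inner ℝ ηC z := by
      have h0 : (inner ℝ (η - ηC) z : ℝ) = 0 := by
        rw [real_inner_comm]; exact hdiff z hzK
      have he : ηC + (η - ηC) = η := by abel
      have h2 : (inner ℝ η z : ℝ) = inner ℝ ηC z + inner ℝ (η - ηC) z := by
        rw [← inner_add_left, he]
      rw [h2, h0, add_zero]
    rw [hsplit]
    -- bound ‖ηC‖ ≤ 1/r
    have hbound : ‖ηC‖ ≤ 1 / r := by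
      by_cases h0 : ηC = 0
      · rw [h0]; simp; positivity
      · have hn : 0 < ‖ηC‖ := norm_pos_iff.mpr h0
        set x : EuclideanSpace ℝ (Fin p) := (r / ‖ηC‖) • ηC with hx
        have hxnorm : ‖x‖ ≤ r := by
          rw [hx, norm_smul, Real.norm_eq_abs, abs_of_pos (by positivity)]
          rw [div_mul_cancel₀]
          exact hn.ne'
        have hxK : x ∈ K := Submodule.smul_mem K _ (K.orthogonalProjectionOnto η).2
        have hproj : (↑(K.orthogonalProjectionOnto x) : EuclideanSpace ℝ (Fin p)) = x := by
          exact (Submodule.starProjection_eq_self_iff (K := K)).mpr hxK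
        have hxC : x ∈ C := by
          have := hrel x hxnorm
          rwa [hproj] at this
        have h1 : (inner ℝ x η : ℝ) ≤ 1 := hη x hxC
        have hinnerC : (inner ℝ ηC η : ℝ) = ‖ηC‖ ^ 2 := by
          have hz0 : (inner ℝ ηC (η - ηC) : ℝ) = 0 :=
            hdiff ηC (K.orthogonalProjectionOnto η).2
          have he : ηC + (η - ηC) = η := by abel
          have h4 : (inner ℝ ηC η : ℝ) = inner ℝ ηC ηC + inner ℝ ηC (η - ηC) := by
            rw [← inner_add_right, he]
          rw [h4, hz0, add_zero, real_inner_self_eq_norm_sq]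
        have h2 : (inner ℝ x η : ℝ) = (r / ‖ηC‖) * ‖ηC‖ ^ 2 := by
          rw [hx, real_inner_smul_left, hinnerC]
        rw [h2] at h1
        have he2 : (r / ‖ηC‖) * ‖ηC‖ ^ 2 = r * ‖ηC‖ := by
          field_simp
        rw [he2] at h1
        rw [le_div_iff₀ hr]
        linarith
    calc (inner ℝ ηC z : ℝ) ≤ ‖ηC‖ * ‖z‖ := real_inner_le_norm ηC z
      _ ≤ (1 / r) * ‖z‖ := by
          apply mul_le_mul_of_nonneg_right hbound (norm_nonneg z)
      _ = ‖z‖ / r := by ring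
  exact key
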